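/- arXiv:2101.11264 — 2 statements merged into one kernel-verified Lean document; each statement's English description precedes it below -/
import Mathlib

section
/- Let J' ⊆ R be the ideal generated by all polynomials of positive degree in the variables x_1,…,x_n alone that are fixed by every signed permutation of x_1,…,x_n (equivalently, positive-degree symmetric polynomials in x_1^2,…,x_n^2). Let 𝒮' be the ℝ-subalgebra of R generated by {Φ^k(q(x_1+y_1,…,x_n+y_n)) : k ∈ ℤ \ {0}, q ∈ ℝ[z_1,…,z_n] fixed by every signed permutation of z_1,…,z_n}. Then every signed multisymmetric polynomial f ∈ R lies in 𝒮' + J'. (This is the algebraic form of the theorem that H*(B_com Sp(n); ℝ) ≅ (ℝ[x] ⊗ ℝ[y])^{W}/J' is generated as an ℝ-algebra by the sets Φ^k(Im ι), k ∈ ℤ \ {0}.) -/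
open MvPolynomial

/-- The `k`-th power map `Φ^k : R → R`, the ℝ-algebra endomorphism with
`Φ^k(x_i) = x_i` and `Φ^k(y_i) = k·y_i`, where `x_i = X (Sum.inl i)`,
`y_i = X (Sum.inr i)` in `R = ℝ[x_1,…,x_n,y_1,…,y_n]`. -/
noncomputable def Φ (n : ℕ) (k : ℤ) :
    MvPolynomial (Fin n ⊕ Fin n) ℝ →ₐ[ℝ] MvPolynomial (Fin n ⊕ Fin n) ℝ :=
  aeval (Sum.elim (fun i => X (Sum.inl i)) (fun i => C (k : ℝ) * X (Sum.inr i)))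

/-- `ι : ℝ[z_1,…,z_n] → R`, `z_i ↦ x_i + y_i`. -/
noncomputable def ι (n : ℕ) :
    MvPolynomial (Fin n) ℝ →ₐ[ℝ] MvPolynomial (Fin n ⊕ Fin n) ℝ :=
  aeval (fun i => X (Sum.inl i) + X (Sum.inr i))

/-- The action of a signed permutation `(ε, σ)` on `R`:
`x_i ↦ ε_i x_{σ(i)}`, `y_i ↦ ε_i y_{σ(i)}`. -/
noncomputable def sAct (n : ℕ) (ε : Fin n → ℤˣ) (σ : Equiv.Perm (Fin n)) :
    MvPolynomial (Fin n ⊕ Fin n) ℝ →ₐ[ℝ] MvPolynomial (Fin n ⊕ Fin n) ℝ :=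
  aeval (Sum.elim (fun i => C ((ε i : ℤ) : ℝ) * X (Sum.inl (σ i)))
                  (fun i => C ((ε i : ℤ) : ℝ) * X (Sum.inr (σ i))))

/-- The action of a signed permutation `(ε, σ)` on `ℝ[z_1,…,z_n]`: `z_i ↦ ε_i z_{σ(i)}`. -/
noncomputable def sActZ (n : ℕ) (ε : Fin n → ℤˣ) (σ : Equiv.Perm (Fin n)) :
    MvPolynomial (Fin n) ℝ →ₐ[ℝ] MvPolynomial (Fin n) ℝ :=
  aeval (fun i => C ((ε i : ℤ) : ℝ) * X (σ i))

/-- The ideal `J'` generated by the positive-degree polynomials in `x_1,…,x_n` alone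
that are fixed by every signed permutation of `x_1,…,x_n`. -/
noncomputable def J' (n : ℕ) : Ideal (MvPolynomial (Fin n ⊕ Fin n) ℝ) :=
  Ideal.span
    {f | ∃ g : MvPolynomial (Fin n) ℝ,
      (∀ (ε : Fin n → ℤˣ) (σ : Equiv.Perm (Fin n)), sActZ n ε σ g = g) ∧
      0 < g.totalDegree ∧ f = rename Sum.inl g}

/-- The subalgebra `𝒮'` generated by `Φ^k(q(x_1+y_1,…,x_n+y_n))` for `k ∈ ℤ \ {0}` and
`q ∈ ℝ[z_1,…,z_n]` fixed by every signed permutation. -/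
noncomputable def S' (n : ℕ) : Subalgebra ℝ (MvPolynomial (Fin n ⊕ Fin n) ℝ) :=
  Algebra.adjoin ℝ
    {f | ∃ k : ℤ, k ≠ 0 ∧ ∃ q : MvPolynomial (Fin n) ℝ,
      (∀ (ε : Fin n → ℤˣ) (σ : Equiv.Perm (Fin n)), sActZ n ε σ q = q) ∧
      f = Φ n k (ι n q)}

section Aux

open Finset

noncomputable def PP (n a b : ℕ) : MvPolynomial (Fin n ⊕ Fin n) ℝ :=
  ∑ i : Fin n, X (Sum.inl i) ^ a * X (Sum.inr i) ^ b

noncomputable def MF (n : ℕ) {r : ℕ} (g : Fin r → Fin n) (w : Fin r → ℕ × ℕ) :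
    MvPolynomial (Fin n ⊕ Fin n) ℝ :=
  ∏ j, X (Sum.inl (g j)) ^ (w j).1 * X (Sum.inr (g j)) ^ (w j).2

noncomputable def OS (n r : ℕ) (w : Fin r → ℕ × ℕ) : MvPolynomial (Fin n ⊕ Fin n) ℝ :=
  ∑ g ∈ Finset.univ.filter (fun g : Fin r → Fin n => Function.Injective g), MF n g w

lemma vandermonde_span {M : Type*} [AddCommGroup M] [Module ℝ M] {N : ℕ}
    (c v : Fin N → M)
    (hv : ∀ j, v j = ∑ d : Fin N, ((((j : ℕ) : ℝ) + 1) ^ (d : ℕ)) • c d) (d : Fin N) :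
    c d ∈ Submodule.span ℝ (Set.range v) := by
  set V : Matrix (Fin N) (Fin N) ℝ := Matrix.vandermonde (fun j => ((j : ℕ) : ℝ) + 1) with hV
  have hdet : V.det ≠ 0 := by
    rw [hV, Matrix.det_vandermonde_ne_zero_iff]
    intro i j h
    simp only at h
    exact Fin.ext (Nat.cast_injective (R := ℝ) (by linarith))
  have hVV : V⁻¹ * V = 1 := Matrix.nonsing_inv_mul V (isUnit_iff_ne_zero.mpr hdet)
  have h2 : ∀ e : Fin N, ∑ j : Fin N, (V⁻¹ d j * (((j : ℕ) : ℝ) + 1) ^ (e : ℕ)) • c e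
      = ((V⁻¹ * V) d e) • c e := by
    intro e
    rw [Matrix.mul_apply, Finset.sum_smul]
    rfl
  have key : ∑ j : Fin N, V⁻¹ d j • v j = c d := by
    calc ∑ j : Fin N, V⁻¹ d j • v j
        = ∑ j : Fin N, ∑ e : Fin N, (V⁻¹ d j * (((j : ℕ) : ℝ) + 1) ^ (e : ℕ)) • c e := by
          simp_rw [hv, Finset.smul_sum, smul_smul]
      _ = ∑ e : Fin N, ∑ j : Fin N, (V⁻¹ d j * (((j : ℕ) : ℝ) + 1) ^ (e : ℕ)) • c e :=
          Finset.sum_comm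
      _ = ∑ e : Fin N, ((V⁻¹ * V) d e) • c e := Finset.sum_congr rfl (fun e _ => h2 e)
      _ = c d := by rw [hVV]; simp [Matrix.one_apply]
  rw [← key]
  exact Submodule.sum_mem _ fun j _ =>
    Submodule.smul_mem _ _ (Submodule.subset_span ⟨j, rfl⟩)

lemma PP_mem (n a b : ℕ) (hab : Even (a + b)) : PP n a b ∈ S' n := by
  set m := a + b with hm
  set q : MvPolynomial (Fin n) ℝ := ∑ i : Fin n, X i ^ m with hq
  have hq_inv : ∀ (ε : Fin n → ℤˣ) (σ : Equiv.Perm (Fin n)), sActZ n ε σ q = q := by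
    intro ε σ
    rw [hq, map_sum]
    have h1 : ∀ i : Fin n, sActZ n ε σ (X i ^ m) = X (σ i) ^ m := by
      intro i
      rw [map_pow, sActZ, aeval_X, mul_pow, ← C_pow]
      have : (((ε i : ℤ) : ℝ)) ^ m = 1 := by
        rcases Int.units_eq_one_or (ε i) with h | h <;> rw [h] <;> push_cast <;>
          simp [hab.neg_one_pow]
      rw [this, C_1, one_mul]
    rw [Finset.sum_congr rfl (fun i _ => h1 i)]
    exact Equiv.sum_comp σ (fun i => X i ^ m)
  set c : Fin (m + 1) → MvPolynomial (Fin n ⊕ Fin n) ℝ :=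
    fun d => (m.choose d : ℝ) • PP n (m - d) d with hc
  set v : Fin (m + 1) → MvPolynomial (Fin n ⊕ Fin n) ℝ :=
    fun j => Φ n ((j : ℕ) + 1) (ι n q) with hvdef
  have hv : ∀ j, v j = ∑ d : Fin (m + 1), ((((j : ℕ) : ℝ) + 1) ^ (d : ℕ)) • c d := by
    intro j
    have hiq : ι n q = ∑ i : Fin n, (X (Sum.inl i) + X (Sum.inr i)) ^ m := by
      rw [hq, map_sum]; simp [ι]
    have hΦ : v j = ∑ i : Fin n,
        (C (((j : ℕ) : ℝ) + 1) * X (Sum.inr i) + X (Sum.inl i)) ^ m := by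
      rw [hvdef]
      simp only [hiq, map_sum, map_pow, map_add, Φ, aeval_X, Sum.elim_inl, Sum.elim_inr]
      refine Finset.sum_congr rfl fun i _ => ?_
      rw [← C_add, add_comm]
      norm_num
    have hbin : ∀ i : Fin n,
        (C (((j : ℕ) : ℝ) + 1) * X (Sum.inr i) + X (Sum.inl i)) ^ m
          = ∑ d ∈ Finset.range (m + 1), ((((j : ℕ) : ℝ) + 1) ^ d) •
              ((m.choose d : ℝ) • (X (Sum.inl i) ^ (m - d) * X (Sum.inr i) ^ d)) := by
      intro i
      rw [add_pow]
      refine Finset.sum_congr rfl fun d _ => ?_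
      rw [smul_smul, smul_eq_C_mul, mul_pow, ← C_pow]
      have hnat : ((m.choose d : ℕ) : MvPolynomial (Fin n ⊕ Fin n) ℝ)
          = C ((m.choose d : ℕ) : ℝ) := by norm_cast
      rw [hnat, C_mul]
      ring
    have hL : v j = ∑ d ∈ Finset.range (m + 1), ∑ i : Fin n, ((((j : ℕ) : ℝ) + 1) ^ d) •
        ((m.choose d : ℝ) • (X (Sum.inl i) ^ (m - d) * X (Sum.inr i) ^ d)) := by
      rw [hΦ, Finset.sum_congr rfl (fun i _ => hbin i)]
      exact Finset.sum_comm
    have hR : ∑ d : Fin (m + 1), ((((j : ℕ) : ℝ) + 1) ^ (d : ℕ)) • c d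
        = ∑ d ∈ Finset.range (m + 1), ∑ i : Fin n, ((((j : ℕ) : ℝ) + 1) ^ d) •
            ((m.choose d : ℝ) • (X (Sum.inl i) ^ (m - d) * X (Sum.inr i) ^ d)) := by
      rw [← Fin.sum_univ_eq_sum_range (fun d => ∑ i : Fin n, ((((j : ℕ) : ℝ) + 1) ^ d) •
          ((m.choose d : ℝ) • (X (Sum.inl i) ^ (m - d) * X (Sum.inr i) ^ d))) (m + 1)]
      refine Finset.sum_congr rfl fun d _ => ?_
      rw [hc]
      simp only [PP, Finset.smul_sum]
    rw [hL, hR]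
  have hvm : ∀ j, v j ∈ S' n := by
    intro j
    exact Algebra.subset_adjoin ⟨((j : ℕ) : ℤ) + 1, by positivity, q, hq_inv, rfl⟩
  have hcd : ∀ d, c d ∈ S' n := by
    intro d
    have hmem := vandermonde_span c v hv d
    have hle : Submodule.span ℝ (Set.range v) ≤ (S' n).toSubmodule := by
      rw [Submodule.span_le]
      rintro x ⟨j, rfl⟩
      exact hvm j
    exact hle hmem
  have hb : b < m + 1 := by omega
  have h1 : c ⟨b, hb⟩ = (m.choose b : ℝ) • PP n a b := by
    show (m.choose b : ℝ) • PP n (m - b) b = (m.choose b : ℝ) • PP n a b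
    rw [show m - b = a by omega]
  have hcne : (m.choose b : ℝ) ≠ 0 := by
    have : 0 < m.choose b := Nat.choose_pos (by omega)
    positivity
  have hPP : PP n a b = (m.choose b : ℝ)⁻¹ • c ⟨b, hb⟩ := by
    rw [h1, smul_smul, inv_mul_cancel₀ hcne, one_smul]
  rw [hPP]
  exact (S' n).smul_mem (hcd _) _

lemma MF_cons (n : ℕ) {r : ℕ} (i0 : Fin n) (g : Fin r → Fin n) (ab : ℕ × ℕ)
    (t : Fin r → ℕ × ℕ) :
    MF n (Fin.cons i0 g) (Fin.cons ab t)
      = (X (Sum.inl i0) ^ ab.1 * X (Sum.inr i0) ^ ab.2) * MF n g t := by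
  unfold MF
  rw [Fin.prod_univ_succ]
  simp [Fin.cons_zero, Fin.cons_succ]

lemma MF_update (n : ℕ) {r : ℕ} (g : Fin r → Fin n) (t : Fin r → ℕ × ℕ) (j : Fin r)
    (a b : ℕ) :
    (X (Sum.inl (g j)) ^ a * X (Sum.inr (g j)) ^ b) * MF n g t
      = MF n g (Function.update t j (a + (t j).1, b + (t j).2)) := by
  unfold MF
  have e1 := Finset.mul_prod_erase (Finset.univ : Finset (Fin r))
      (fun j' => X (Sum.inl (g j')) ^ (t j').1 * X (Sum.inr (g j')) ^ (t j').2
        : Fin r → MvPolynomial (Fin n ⊕ Fin n) ℝ) (Finset.mem_univ j)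
  have e2 := Finset.mul_prod_erase (Finset.univ : Finset (Fin r))
      (fun j' => X (Sum.inl (g j')) ^ ((Function.update t j (a + (t j).1, b + (t j).2)) j').1
        * X (Sum.inr (g j')) ^ ((Function.update t j (a + (t j).1, b + (t j).2)) j').2
        : Fin r → MvPolynomial (Fin n ⊕ Fin n) ℝ) (Finset.mem_univ j)
  rw [← e1, ← e2]
  have herase : ∏ j' ∈ Finset.univ.erase j,
      (X (Sum.inl (g j')) ^ ((Function.update t j (a + (t j).1, b + (t j).2)) j').1
        * X (Sum.inr (g j')) ^ ((Function.update t j (a + (t j).1, b + (t j).2)) j').2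
        : MvPolynomial (Fin n ⊕ Fin n) ℝ)
      = ∏ j' ∈ Finset.univ.erase j,
        (X (Sum.inl (g j')) ^ (t j').1 * X (Sum.inr (g j')) ^ (t j').2) := by
    refine Finset.prod_congr rfl fun j' hj' => ?_
    rw [Function.update_of_ne (Finset.ne_of_mem_erase hj')]
  rw [herase]
  simp only [Function.update_self, pow_add]
  ring

lemma OS_rec (n : ℕ) {r : ℕ} (ab : ℕ × ℕ) (t : Fin r → ℕ × ℕ) :
    PP n ab.1 ab.2 * OS n r t
      = OS n (r + 1) (Fin.cons ab t)
        + ∑ j : Fin r, OS n r (Function.update t j (ab.1 + (t j).1, ab.2 + (t j).2)) := by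
  classical
  set Inj : ∀ r' : ℕ, Finset (Fin r' → Fin n) :=
    fun r' => Finset.univ.filter (fun g : Fin r' → Fin n => Function.Injective g) with hInj
  have hlhs : PP n ab.1 ab.2 * OS n r t
      = ∑ g ∈ Inj r, ∑ i : Fin n,
          (X (Sum.inl i) ^ ab.1 * X (Sum.inr i) ^ ab.2) * MF n g t := by
    rw [PP, OS, Finset.sum_mul_sum]
    exact Finset.sum_comm
  have hsplit : ∀ g ∈ Inj r, ∑ i : Fin n,
      (X (Sum.inl i) ^ ab.1 * X (Sum.inr i) ^ ab.2) * MF n g t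
      = (∑ i ∈ Finset.univ \ Finset.image g Finset.univ,
          (X (Sum.inl i) ^ ab.1 * X (Sum.inr i) ^ ab.2) * MF n g t)
        + ∑ i ∈ Finset.image g Finset.univ,
          (X (Sum.inl i) ^ ab.1 * X (Sum.inr i) ^ ab.2) * MF n g t := by
    intro g _
    exact (Finset.sum_sdiff (Finset.subset_univ _)).symm
  rw [hlhs, Finset.sum_congr rfl hsplit, Finset.sum_add_distrib]
  congr 1
  · -- first part: the cons orbit sum
    set T : Finset ((Fin r → Fin n) × Fin n) :=
      Finset.univ.filter (fun p : (Fin r → Fin n) × Fin n =>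
        Function.Injective p.1 ∧ p.2 ∉ Finset.image p.1 Finset.univ) with hT
    have h1 : ∑ p ∈ T, (X (Sum.inl p.2) ^ ab.1 * X (Sum.inr p.2) ^ ab.2) * MF n p.1 t
        = ∑ g ∈ Inj r, ∑ i ∈ Finset.univ \ Finset.image g Finset.univ,
            (X (Sum.inl i) ^ ab.1 * X (Sum.inr i) ^ ab.2) * MF n g t := by
      refine Finset.sum_finset_product T (Inj r)
        (fun g => Finset.univ \ Finset.image g Finset.univ) ?_
      intro p
      simp [hT, hInj]
    rw [← h1, OS]
    refine Finset.sum_nbij' (fun p => Fin.cons p.2 p.1) (fun h => (h ∘ Fin.succ, h 0))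
      ?_ ?_ ?_ ?_ ?_
    · intro p hp
      rw [hT] at hp
      obtain ⟨hp1, hp2⟩ := (Finset.mem_filter.mp hp).2
      refine Finset.mem_filter.mpr ⟨Finset.mem_univ _, Fin.cons_injective_iff.mpr ⟨?_, hp1⟩⟩
      rintro ⟨j', hj'⟩
      exact hp2 (Finset.mem_image.mpr ⟨j', Finset.mem_univ _, hj'⟩)
    · intro h hh
      have hinj : Function.Injective h := (Finset.mem_filter.mp hh).2
      refine Finset.mem_filter.mpr ⟨Finset.mem_univ _, hinj.comp (Fin.succ_injective r), ?_⟩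
      intro hmem
      obtain ⟨j', _, hj'⟩ := Finset.mem_image.mp hmem
      exact Fin.succ_ne_zero j' (hinj hj')
    · intro p _
      refine Prod.ext ?_ ?_
      · funext j'; simp [Fin.cons_succ]
      · simp [Fin.cons_zero]
    · intro h _
      exact Fin.cons_self_tail h
    · intro p _
      exact (MF_cons n p.2 p.1 ab t).symm
  · -- second part: merged orbit sums
    have h2 : ∀ g ∈ Inj r, ∑ i ∈ Finset.image g Finset.univ,
        (X (Sum.inl i) ^ ab.1 * X (Sum.inr i) ^ ab.2) * MF n g t
        = ∑ j : Fin r, MF n g (Function.update t j (ab.1 + (t j).1, ab.2 + (t j).2)) := by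
      intro g hg
      have hinj : Function.Injective g := (Finset.mem_filter.mp hg).2
      rw [Finset.sum_image (fun a _ b _ h => hinj h)]
      exact Finset.sum_congr rfl fun j _ => MF_update n g t j ab.1 ab.2
    rw [Finset.sum_congr rfl h2, Finset.sum_comm]
    rfl

lemma OS_zero (n : ℕ) (w : Fin 0 → ℕ × ℕ) : OS n 0 w = 1 := by
  have hfil : (Finset.univ.filter (fun g : Fin 0 → Fin n => Function.Injective g))
      = Finset.univ :=
    Finset.filter_true_of_mem (fun g _ => Function.injective_of_subsingleton g)
  rw [OS, hfil]
  have hMF : ∀ g : Fin 0 → Fin n, MF n g w = 1 := by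
    intro g; rw [MF]; exact Finset.prod_of_isEmpty _
  rw [Finset.sum_congr rfl (fun g _ => hMF g), Finset.sum_const, Finset.card_univ]
  simp

lemma OS_mem (n : ℕ) : ∀ (r : ℕ) (w : Fin r → ℕ × ℕ),
    (∀ j, Even ((w j).1 + (w j).2)) → OS n r w ∈ S' n := by
  intro r
  induction r with
  | zero => intro w _; rw [OS_zero]; exact one_mem _
  | succ r ih =>
    intro w hw
    have hrec := OS_rec n (w 0) (Fin.tail w)
    have hcons : Fin.cons (w 0) (Fin.tail w) = w := Fin.cons_self_tail w
    rw [hcons] at hrec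
    have hOS : OS n (r + 1) w = PP n (w 0).1 (w 0).2 * OS n r (Fin.tail w)
        - ∑ j : Fin r, OS n r (Function.update (Fin.tail w) j
            ((w 0).1 + (Fin.tail w j).1, (w 0).2 + (Fin.tail w j).2)) := by
      rw [hrec]; ring
    rw [hOS]
    refine sub_mem (mul_mem (PP_mem n _ _ (hw 0)) (ih _ (fun j => hw j.succ)))
      (sum_mem fun j _ => ih _ ?_)
    intro j'
    rcases eq_or_ne j' j with rfl | hne
    · rw [Function.update_self]
      obtain ⟨u, hu⟩ := hw 0
      obtain ⟨v, hv⟩ := hw j'.succ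
      have hv' : (Fin.tail w j').1 + (Fin.tail w j').2 = v + v := hv
      exact ⟨u + v, by simp only []; omega⟩
    · rw [Function.update_of_ne hne]
      exact hw j'.succ

lemma sum_perm_eq_OS (n : ℕ) (w : Fin n → ℕ × ℕ) :
    ∑ σ : Equiv.Perm (Fin n), MF n (⇑σ) w = OS n n w := by
  rw [OS]
  refine Finset.sum_bij (fun (σ : Equiv.Perm (Fin n)) _ => ⇑σ) ?_ ?_ ?_ ?_
  · intro σ _; exact Finset.mem_filter.mpr ⟨Finset.mem_univ _, σ.injective⟩
  · intro σ1 _ σ2 _ h; exact Equiv.coe_fn_injective h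
  · intro g hg
    have hinj : Function.Injective g := (Finset.mem_filter.mp hg).2
    exact ⟨Equiv.ofBijective g (Finite.injective_iff_bijective.mp hinj), Finset.mem_univ _, rfl⟩
  · intro σ _; rfl

lemma sAct_monomial (n : ℕ) (ε : Fin n → ℤˣ) (σ : Equiv.Perm (Fin n))
    (m : (Fin n ⊕ Fin n) →₀ ℕ) :
    sAct n ε σ (monomial m 1)
      = (∏ i : Fin n, (C ((ε i : ℤ) : ℝ) : MvPolynomial (Fin n ⊕ Fin n) ℝ)
            ^ (m (Sum.inl i) + m (Sum.inr i)))
        * MF n (⇑σ) (fun i => (m (Sum.inl i), m (Sum.inr i))) := by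
  have hmono : (monomial m 1 : MvPolynomial (Fin n ⊕ Fin n) ℝ)
      = ∏ v : Fin n ⊕ Fin n, X v ^ m v := by
    rw [← prod_X_pow_eq_monomial]
    refine Finset.prod_subset (Finset.subset_univ _) fun v _ hv => ?_
    rw [Finsupp.notMem_support_iff.mp hv, pow_zero]
  rw [hmono, map_prod, Fintype.prod_sum_type]
  simp only [map_pow, sAct, aeval_X, Sum.elim_inl, Sum.elim_inr, MF, mul_pow, pow_add,
    Finset.prod_mul_distrib]
  ring

lemma T_mem (n : ℕ) (m : (Fin n ⊕ Fin n) →₀ ℕ) :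
    (∑ p : (Fin n → ℤˣ) × Equiv.Perm (Fin n), sAct n p.1 p.2 (monomial m 1)) ∈ S' n := by
  classical
  set w : Fin n → ℕ × ℕ := fun i => (m (Sum.inl i), m (Sum.inr i)) with hwdef
  set cexp : Fin n → ℕ := fun i => m (Sum.inl i) + m (Sum.inr i) with hcexp
  have hsum : ∑ p : (Fin n → ℤˣ) × Equiv.Perm (Fin n), sAct n p.1 p.2 (monomial m 1)
      = (∑ ε : Fin n → ℤˣ, ∏ i : Fin n,
            (C ((ε i : ℤ) : ℝ) : MvPolynomial (Fin n ⊕ Fin n) ℝ) ^ cexp i)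
        * ∑ σ : Equiv.Perm (Fin n), MF n (⇑σ) w := by
    rw [Fintype.sum_prod_type, Finset.sum_mul_sum]
    exact Finset.sum_congr rfl fun ε _ => Finset.sum_congr rfl fun σ _ =>
      sAct_monomial n ε σ m
  have hunits : (Finset.univ : Finset ℤˣ) = {1, -1} := by
    ext u
    simp only [Finset.mem_univ, true_iff, Finset.mem_insert, Finset.mem_singleton]
    exact Int.units_eq_one_or u
  have hfac : ∀ c : ℕ, (∑ u : ℤˣ, (C ((u : ℤ) : ℝ) : MvPolynomial (Fin n ⊕ Fin n) ℝ) ^ c)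
      = 1 + (-1 : MvPolynomial (Fin n ⊕ Fin n) ℝ) ^ c := by
    intro c
    rw [hunits, Finset.sum_insert (by decide), Finset.sum_singleton]
    norm_num
  have hswap : (∑ ε : Fin n → ℤˣ, ∏ i : Fin n,
      (C ((ε i : ℤ) : ℝ) : MvPolynomial (Fin n ⊕ Fin n) ℝ) ^ cexp i)
      = ∏ i : Fin n, (1 + (-1 : MvPolynomial (Fin n ⊕ Fin n) ℝ) ^ cexp i) := by
    rw [← Fintype.prod_sum (fun i (u : ℤˣ) =>
      (C ((u : ℤ) : ℝ) : MvPolynomial (Fin n ⊕ Fin n) ℝ) ^ cexp i)]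
    exact Finset.prod_congr rfl fun i _ => hfac (cexp i)
  rw [hsum, hswap, sum_perm_eq_OS]
  by_cases hall : ∀ i : Fin n, Even (cexp i)
  · have hprod : ∏ i : Fin n, (1 + (-1 : MvPolynomial (Fin n ⊕ Fin n) ℝ) ^ cexp i)
        = C ((2 : ℝ) ^ n) := by
      have h21 : ∀ i : Fin n, (1 + (-1 : MvPolynomial (Fin n ⊕ Fin n) ℝ) ^ cexp i) = 2 :=
        fun i => by rw [(hall i).neg_one_pow]; norm_num
      rw [Finset.prod_congr rfl (fun i _ => h21 i), Finset.prod_const, Finset.card_univ,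
        Fintype.card_fin, map_pow, map_ofNat]
    rw [hprod, ← smul_eq_C_mul]
    exact (S' n).smul_mem (OS_mem n n w (fun j => hall j)) _
  · push_neg at hall
    obtain ⟨i0, hi0⟩ := hall
    have hzero : ∏ i : Fin n, (1 + (-1 : MvPolynomial (Fin n ⊕ Fin n) ℝ) ^ cexp i) = 0 := by
      refine Finset.prod_eq_zero (Finset.mem_univ i0) ?_
      rw [(Nat.not_even_iff_odd.mp hi0).neg_one_pow]
      ring
    rw [hzero, zero_mul]
    exact zero_mem _

theorem stmt12' (n : ℕ) (hn : 1 ≤ n) (f : MvPolynomial (Fin n ⊕ Fin n) ℝ)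
    (hf : ∀ (ε : Fin n → ℤˣ) (σ : Equiv.Perm (Fin n)), sAct n ε σ f = f) :
    f ∈ S' n := by
  classical
  set G := (Fin n → ℤˣ) × Equiv.Perm (Fin n) with hG
  set cG : ℝ := (Fintype.card G : ℝ) with hcG
  have hcne : cG ≠ 0 := Nat.cast_ne_zero.mpr Fintype.card_ne_zero
  have h1 : cG • f = ∑ p : G, sAct n p.1 p.2 f := by
    rw [Finset.sum_congr rfl (fun p _ => hf p.1 p.2), Finset.sum_const, Finset.card_univ,
      hcG, Nat.cast_smul_eq_nsmul]
  have h2 : ∑ p : G, sAct n p.1 p.2 f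
      = ∑ m ∈ f.support, (coeff m f) • ∑ p : G, sAct n p.1 p.2 (monomial m 1) := by
    have hfe : ∀ p : G, sAct n p.1 p.2 f
        = ∑ m ∈ f.support, (coeff m f) • sAct n p.1 p.2 (monomial m 1) := by
      intro p
      conv_lhs => rw [← f.support_sum_monomial_coeff]
      rw [map_sum]
      refine Finset.sum_congr rfl fun m _ => ?_
      rw [← map_smul, smul_monomial, smul_eq_mul, mul_one]
    rw [Finset.sum_congr rfl (fun p _ => hfe p), Finset.sum_comm]
    exact Finset.sum_congr rfl fun m _ => (Finset.smul_sum).symm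
  have h3 : cG • f ∈ S' n := by
    rw [h1, h2]
    exact sum_mem fun m _ => (S' n).smul_mem (T_mem n m) _
  have h4 : f = cG⁻¹ • (cG • f) := by
    rw [smul_smul, inv_mul_cancel₀ hcne, one_smul]
  rw [h4]
  exact (S' n).smul_mem h3 _

end Aux

/-- every signed multisymmetric polynomial `f ∈ R` lies in `𝒮' + J'`. -/
theorem stmt12 (n : ℕ) (hn : 1 ≤ n) (f : MvPolynomial (Fin n ⊕ Fin n) ℝ)
    (hf : ∀ (ε : Fin n → ℤˣ) (σ : Equiv.Perm (Fin n)), sAct n ε σ f = f) :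
    ∃ s ∈ S' n, ∃ h ∈ J' n, f = s + h := by
  exact ⟨f, stmt12' n hn f hf, 0, (J' n).zero_mem, (add_zero f).symm⟩
end

section
/- Fix an even integer m ≥ 2. Define A_0 := Σ_{i=1}^n (x_i + y_i)^m ∈ R and, recursively, A_k := Φ^{k+1}(A_{k−1}) − (k+1)^k · A_{k−1} for 1 ≤ k ≤ m−1. Then A_{m−1} − (Π_{k=2}^m (k^m − k^{k−1})) · P_{0,m} ∈ J', where J' ⊆ R is the ideal generated by all polynomials of positive degree in the variables x_1,…,x_n alone that are fixed by every signed permutation of x_1,…,x_n (equivalently, positive-degree symmetric polynomials in x_1^2,…,x_n^2). -/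
open MvPolynomial

/-- `P n a b = ∑ i, x_i^a * y_i^b` in `R = ℝ[x_1,…,x_n,y_1,…,y_n]`,
where `x_i = X (Sum.inl i)` and `y_i = X (Sum.inr i)`. -/
noncomputable def P (n : ℕ) (a b : ℕ) : MvPolynomial (Fin n ⊕ Fin n) ℝ :=
  ∑ i : Fin n, X (Sum.inl i) ^ a * X (Sum.inr i) ^ b

lemma Phi_P (n : ℕ) (k : ℤ) (a b : ℕ) : Φ n k (P n a b) = ((k:ℝ)^b) • P n a b := by
  simp only [Φ, P, map_sum, map_mul, map_pow, aeval_X, Sum.elim_inl, Sum.elim_inr,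
    Finset.smul_sum, mul_pow]
  refine Finset.sum_congr rfl fun i _ => ?_
  rw [smul_eq_C_mul, ← C_pow]
  ring

lemma A0_eq (n m : ℕ) :
    (∑ i : Fin n, (X (Sum.inl i) + X (Sum.inr i)) ^ m : MvPolynomial (Fin n ⊕ Fin n) ℝ)
      = ∑ b ∈ Finset.range (m+1), ((m.choose b : ℝ)) • P n (m - b) b := by
  have h : ∀ i : Fin n, (X (Sum.inl i) + X (Sum.inr i) : MvPolynomial (Fin n ⊕ Fin n) ℝ) ^ m
      = ∑ b ∈ Finset.range (m+1),
        (m.choose b : ℝ) • (X (Sum.inl i) ^ (m - b) * X (Sum.inr i) ^ b) := by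
    intro i
    rw [add_pow, ← Finset.sum_range_reflect]
    refine Finset.sum_congr rfl fun b hb => ?_
    have hb' : b ≤ m := by simpa [Nat.lt_succ_iff] using hb
    have h1 : m + 1 - 1 - b = m - b := by omega
    have h2 : m - (m - b) = b := by omega
    rw [h1, h2, Nat.choose_symm hb', smul_eq_C_mul]
    ring_nf
    simp [C_eq_coe_nat]
  rw [Finset.sum_congr rfl (fun i _ => h i), Finset.sum_comm]
  simp [P, Finset.smul_sum]

lemma key (n m : ℕ) (A : ℕ → MvPolynomial (Fin n ⊕ Fin n) ℝ)
    (hA0 : A 0 = ∑ i : Fin n, (X (Sum.inl i) + X (Sum.inr i)) ^ m)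
    (hArec : ∀ k : ℕ, 1 ≤ k → k ≤ m - 1 →
      A k = Φ n ((k : ℤ) + 1) (A (k - 1)) - (((k : ℝ) + 1) ^ k) • A (k - 1)) :
    ∀ k, k ≤ m - 1 → A k = ∑ b ∈ Finset.range (m+1),
      ((m.choose b : ℝ) * ∏ j ∈ Finset.Icc 2 (k+1), ((j:ℝ)^b - (j:ℝ)^(j-1))) • P n (m-b) b := by
  intro k
  induction k with
  | zero =>
    intro _
    simpa [A0_eq] using hA0
  | succ k ih =>
    intro hk
    have hk' : k ≤ m - 1 := by omega
    rw [hArec (k+1) (by omega) hk]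
    simp only [Nat.add_sub_cancel]
    rw [ih hk']
    rw [map_sum, Finset.smul_sum]
    rw [← Finset.sum_sub_distrib]
    refine Finset.sum_congr rfl fun b _ => ?_
    rw [map_smul, Phi_P, smul_smul, smul_smul, ← sub_smul]
    congr 1
    have h2 : 2 ≤ k + 1 + 1 := by omega
    rw [Finset.prod_Icc_succ_top h2]
    push_cast
    ring

lemma mem_J' (n : ℕ) (hn : 1 ≤ n) (m : ℕ) (hm : 0 < m) (hme : Even m)
    (c : ℝ) (hc : c ≠ 0) : c • P n m 0 ∈ J' n := by
  set g : MvPolynomial (Fin n) ℝ := C c * ∑ i : Fin n, X i ^ m with hg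
  have hunit : ∀ (ε : Fin n → ℤˣ) (σ : Equiv.Perm (Fin n)), sActZ n ε σ g = g := by
    intro ε σ
    simp only [hg, sActZ, map_mul, map_sum, aeval_X, aeval_C, algebraMap_eq, map_pow]
    congr 1
    have h1 : ∀ i : Fin n, ((ε i : ℤ) : ℝ) ^ m = 1 := by
      intro i
      rcases Int.units_eq_one_or (ε i) with h | h <;> simp [h, hme.neg_one_pow]
    have h2 : ∀ i : Fin n, (C ((ε i : ℤ) : ℝ) * X (σ i) : MvPolynomial (Fin n) ℝ) ^ m
        = X (σ i) ^ m := by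
      intro i; rw [mul_pow, ← C_pow, h1 i, map_one, one_mul]
    rw [Finset.sum_congr rfl fun i _ => h2 i]
    exact Equiv.sum_comp σ (fun i => X i ^ m)
  have hcoeff : coeff (Finsupp.single (⟨0, hn⟩ : Fin n) m) g = c := by
    rw [hg, coeff_C_mul]
    have : coeff (Finsupp.single (⟨0, hn⟩ : Fin n) m)
        (∑ i : Fin n, (X i : MvPolynomial (Fin n) ℝ) ^ m) = 1 := by
      rw [coeff_sum]
      have : ∀ i : Fin n, coeff (Finsupp.single (⟨0, hn⟩ : Fin n) m)
          ((X i : MvPolynomial (Fin n) ℝ) ^ m) = if i = ⟨0, hn⟩ then 1 else 0 := by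
        intro i
        rw [X_pow_eq_monomial, coeff_monomial]
        by_cases h : i = ⟨0, hn⟩
        · simp [h]
        · simp [h, Finsupp.single_eq_single_iff, hm.ne']
      simp [this]
    rw [this, mul_one]
  have hdeg : 0 < g.totalDegree := by
    have hsup : Finsupp.single (⟨0, hn⟩ : Fin n) m ∈ g.support := by
      rw [mem_support_iff, hcoeff]; exact hc
    have := le_totalDegree hsup
    have h2 : (Finsupp.single (⟨0, hn⟩ : Fin n) m).sum (fun _ e => e) = m := by simp
    omega
  have hren : c • P n m 0 = rename Sum.inl g := by
    rw [hg, map_mul, map_sum, rename_C, smul_eq_C_mul, P]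
    simp [Finset.mul_sum]
  rw [hren]
  exact Ideal.subset_span ⟨g, hunit, hdeg, rfl⟩

/-- for even `m ≥ 2`, with `A_0 = ∑ (x_i + y_i)^m` and
`A_k = Φ^{k+1}(A_{k-1}) − (k+1)^k · A_{k-1}` for `1 ≤ k ≤ m−1`, one has
`A_{m−1} − (∏_{k=2}^m (k^m − k^{k−1}))·P_{0,m} ∈ J'`. -/
theorem stmt13 (n : ℕ) (hn : 1 ≤ n) (m : ℕ) (hm : 2 ≤ m) (hme : Even m)
    (A : ℕ → MvPolynomial (Fin n ⊕ Fin n) ℝ)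
    (hA0 : A 0 = ∑ i : Fin n, (X (Sum.inl i) + X (Sum.inr i)) ^ m)
    (hArec : ∀ k : ℕ, 1 ≤ k → k ≤ m - 1 →
      A k = Φ n ((k : ℤ) + 1) (A (k - 1)) - (((k : ℝ) + 1) ^ k) • A (k - 1)) :
    A (m - 1) - (∏ k ∈ Finset.Icc 2 m, ((k : ℝ) ^ m - (k : ℝ) ^ (k - 1))) • P n 0 m ∈ J' n := by
  have hkey := key n m A hA0 hArec (m - 1) le_rfl
  have hm1 : m - 1 + 1 = m := by omega
  rw [hm1] at hkey
  set c0 : ℝ := ∏ j ∈ Finset.Icc 2 m, (1 - (j : ℝ) ^ (j - 1)) with hc0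
  set cm : ℝ := ∏ k ∈ Finset.Icc 2 m, ((k : ℝ) ^ m - (k : ℝ) ^ (k - 1)) with hcm
  have hsub : ({0, m} : Finset ℕ) ⊆ Finset.range (m + 1) := by
    intro b hb
    simp only [Finset.mem_insert, Finset.mem_singleton] at hb
    rw [Finset.mem_range]; omega
  have hzero : ∀ b ∈ Finset.range (m + 1), b ∉ ({0, m} : Finset ℕ) →
      ((m.choose b : ℝ) * ∏ j ∈ Finset.Icc 2 m, ((j:ℝ)^b - (j:ℝ)^(j-1))) • P n (m - b) b
        = 0 := by
    intro b hb hb'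
    simp only [Finset.mem_insert, Finset.mem_singleton, Finset.mem_range] at hb hb'
    push_neg at hb'
    have h1 : b + 1 ∈ Finset.Icc 2 m := by rw [Finset.mem_Icc]; omega
    have h2 : ((b + 1 : ℕ) : ℝ) ^ b - ((b + 1 : ℕ) : ℝ) ^ (b + 1 - 1) = 0 := by simp
    rw [Finset.prod_eq_zero h1 h2, mul_zero, zero_smul]
  have hsum : A (m - 1) = c0 • P n m 0 + cm • P n 0 m := by
    rw [hkey, ← Finset.sum_subset hsub hzero,
      Finset.sum_pair (show (0:ℕ) ≠ m by omega)]
    congr 1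
    · simp [hc0]
    · simp [hcm]
  have hc0ne : c0 ≠ 0 := by
    rw [hc0, Finset.prod_ne_zero_iff]
    intro j hj
    rw [Finset.mem_Icc] at hj
    have h1 : (1 : ℝ) < (j : ℝ) ^ (j - 1) := by
      apply one_lt_pow₀
      · exact_mod_cast (by omega : 1 < j)
      · omega
    exact sub_ne_zero.mpr h1.ne
  rw [hsum, add_sub_cancel_right]
  exact mem_J' n hn m (by omega) hme c0 hc0ne
end
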